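/- Consider the extended finite-horizon LTV system of a plant N and a block-diagonal IQC filter Ψ=diag(Ψ_v,Ψ_w): state x=(x_N,x_v,x_w) with x_N'=A_N x_N+B_w w+B_d d; v=C_v x_N+D_{vw} w+D_{vd} d; x_v'=A₁x_v+B₁v, z_v=C₁x_v+D₁v; x_w'=A₂x_w+B₂w, z_w=C₂x_w+D₂w; e_I=C_I x_N+D_{Iw}w+D_{Id}d; e_E=C_E x_N; with z:=(z_v,z_w) and M:=diag(M_v,−M_w) where M_v(t), M_w(t) are positive definite for all t, and D₁(t), D₂(t) have full column rank. Let ε>0, γ>0, and suppose a continuously differentiable symmetric P on the extended state satisfies P(T)−𝒞_E(T)ᵀ𝒞_E(T) positive semidefinite and, for all t∈[0,T], [[P'+𝒜ᵀP+P𝒜, Pℬ],[ℬᵀP, 0]] + [[Q,S],[Sᵀ,R]] + [𝒞_z 𝒟_z]ᵀM[𝒞_z 𝒟_z] + εI negative semidefinite, where (𝒜,ℬ,𝒞_z,𝒟_z,𝒞_I,𝒟_I,𝒞_E) are the state-space matrices of the extended system, Q:=𝒞_Iᵀ𝒞_I, S:=𝒞_Iᵀ𝒟_I, R:=𝒟_Iᵀ𝒟_I−γ²diag(0_{n_w},I_{n_d}).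 Let X_v, X_w solve the respective factorization Riccati differential equations with terminal conditions X_v(T)=0, X_w(T)=0, let W_v, W_w be continuous square roots (W_vᵀW_v=D₁ᵀM_vD₁, W_wᵀW_w=D₂ᵀM_wD₂), and define the scaled signals ṽ:=W_v⁻ᵀ(B₁ᵀX_v+D₁ᵀM_vC₁)x_v+W_vv, w̃:=W_w⁻ᵀ(B₂ᵀX_w+D₂ᵀM_wC₂)x_w+W_ww, d̃:=γd. Then for all continuous inputs w, d and the trajectory with x(0)=0, the scaled system satisfies the nominal performance bound ‖e_E(T)‖² + ∫₀ᵀ(‖ṽ(t)‖²+‖e_I(t)‖²) dt ≤ ∫₀ᵀ‖w̃(t)‖² dt + (1−ε/γ²)∫₀ᵀ‖d̃(t)‖² dt. -/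

import Mathlib

open Matrix Set

/-- The matrix appearing in the robust-performance differential LMI. -/
noncomputable def dlmiRob {ι κ σ : Type*} [Fintype ι] [Fintype κ] [Fintype σ]
    [DecidableEq ι] [DecidableEq κ]
    (P' P 𝒜 : Matrix ι ι ℝ) (ℬ : Matrix ι κ ℝ)
    (Q : Matrix ι ι ℝ) (S : Matrix ι κ ℝ) (R : Matrix κ κ ℝ)
    (Cz : Matrix σ ι ℝ) (Dz : Matrix σ κ ℝ) (M : Matrix σ σ ℝ) (ε : ℝ) :
    Matrix (ι ⊕ κ) (ι ⊕ κ) ℝ :=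
  fromBlocks (P' + 𝒜ᵀ * P + P * 𝒜) (P * ℬ) (ℬᵀ * P) 0
    + fromBlocks Q S Sᵀ R
    + (fromCols Cz Dz)ᵀ * M * (fromCols Cz Dz)
    + ε • 1


section auxiliary
set_option linter.unusedSectionVars false
set_option linter.unnecessarySeqFocus false
set_option maxHeartbeats 1000000

open Matrix

section dotAux
variable {l m n p : Type*} [Fintype l] [Fintype m] [Fintype n] [Fintype p]

lemma dpml (N : Matrix m n ℝ) (x : n → ℝ) (y : m → ℝ) :
    (N *ᵥ x) ⬝ᵥ y = x ⬝ᵥ (Nᵀ *ᵥ y) := by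
  rw [dotProduct_comm, dotProduct_mulVec, dotProduct_comm, ← Matrix.mulVec_transpose]

lemma dp_self_nonneg (x : n → ℝ) : 0 ≤ x ⬝ᵥ x :=
  Finset.sum_nonneg fun i _ => mul_self_nonneg _

lemma qf_blocks (A : Matrix n n ℝ) (B : Matrix n m ℝ) (C : Matrix m n ℝ) (D : Matrix m m ℝ)
    (x : n → ℝ) (y : m → ℝ) :
    Sum.elim x y ⬝ᵥ (fromBlocks A B C D *ᵥ Sum.elim x y)
      = x ⬝ᵥ (A *ᵥ x) + x ⬝ᵥ (B *ᵥ y) + (y ⬝ᵥ (C *ᵥ x) + y ⬝ᵥ (D *ᵥ y)) := by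
  rw [fromBlocks_mulVec]
  simp only [Sum.elim_comp_inl, Sum.elim_comp_inr]
  rw [sumElim_dotProduct_sumElim, dotProduct_add, dotProduct_add]

/-- completion of squares / spectral factorization identity -/
lemma completion [DecidableEq m]
    (X X' A : Matrix n n ℝ) (B : Matrix n m ℝ) (C : Matrix p n ℝ) (D : Matrix p m ℝ)
    (M : Matrix p p ℝ) (W : Matrix m m ℝ)
    (hX : Xᵀ = X) (hM : Mᵀ = M) (hW : Wᵀ * W = Dᵀ * M * D) (hWinv : IsUnit W.det)
    (hRDE : X' + Aᵀ*X + X*A + Cᵀ*M*C -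
      (X*B + Cᵀ*M*D) * (Dᵀ*M*D)⁻¹ * (X*B + Cᵀ*M*D)ᵀ = 0)
    (x : n → ℝ) (v : m → ℝ) :
    ((Wᵀ)⁻¹ *ᵥ ((Bᵀ*X + Dᵀ*M*C) *ᵥ x) + W *ᵥ v) ⬝ᵥ
      ((Wᵀ)⁻¹ *ᵥ ((Bᵀ*X + Dᵀ*M*C) *ᵥ x) + W *ᵥ v)
    = (C *ᵥ x + D *ᵥ v) ⬝ᵥ (M *ᵥ (C *ᵥ x + D *ᵥ v))
      + ((A *ᵥ x + B *ᵥ v) ⬝ᵥ (X *ᵥ x) + x ⬝ᵥ (X' *ᵥ x)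
         + x ⬝ᵥ (X *ᵥ (A *ᵥ x + B *ᵥ v))) := by
  set K : Matrix n m ℝ := X*B + Cᵀ*M*D with hK
  have hKT : Kᵀ = Bᵀ*X + Dᵀ*M*C := by
    simp [hK, Matrix.transpose_add, Matrix.transpose_mul, hX, hM, Matrix.mul_assoc]
  have hWTinvT : ((Wᵀ)⁻¹)ᵀ = W⁻¹ := by
    rw [Matrix.transpose_nonsing_inv, Matrix.transpose_transpose]
  have hinv : (Dᵀ*M*D)⁻¹ = W⁻¹ * (Wᵀ)⁻¹ := by
    rw [← hW, Matrix.mul_inv_rev]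
  have hX'eq : X' = K * (Dᵀ*M*D)⁻¹ * Kᵀ - Aᵀ*X - X*A - Cᵀ*M*C := by
    have h := hRDE
    ext i j
    have h2 := congrFun (congrFun h i) j
    simp only [Matrix.add_apply, Matrix.sub_apply, Matrix.zero_apply] at h2 ⊢
    linarith
  rw [← hKT]
  have expand : ∀ (a b : m → ℝ), ((Wᵀ)⁻¹ *ᵥ a + W *ᵥ b) ⬝ᵥ ((Wᵀ)⁻¹ *ᵥ a + W *ᵥ b)
      = a ⬝ᵥ ((Dᵀ*M*D)⁻¹ *ᵥ a) + a ⬝ᵥ b + b ⬝ᵥ a + b ⬝ᵥ ((Dᵀ*M*D) *ᵥ b) := by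
    intro a b
    rw [add_dotProduct, dotProduct_add, dotProduct_add]
    have h1 : ((Wᵀ)⁻¹ *ᵥ a) ⬝ᵥ ((Wᵀ)⁻¹ *ᵥ a) = a ⬝ᵥ ((Dᵀ*M*D)⁻¹ *ᵥ a) := by
      rw [dpml, hWTinvT, Matrix.mulVec_mulVec, hinv]
    have h2 : ((Wᵀ)⁻¹ *ᵥ a) ⬝ᵥ (W *ᵥ b) = a ⬝ᵥ b := by
      rw [dpml, hWTinvT, Matrix.mulVec_mulVec, Matrix.nonsing_inv_mul _ hWinv, Matrix.one_mulVec]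
    have h3 : (W *ᵥ b) ⬝ᵥ ((Wᵀ)⁻¹ *ᵥ a) = b ⬝ᵥ a := by
      rw [dotProduct_comm, h2, dotProduct_comm]
    have h4 : (W *ᵥ b) ⬝ᵥ (W *ᵥ b) = b ⬝ᵥ ((Dᵀ*M*D) *ᵥ b) := by
      rw [dpml, Matrix.mulVec_mulVec, hW]
    rw [h1, h2, h3, h4]; ring
  rw [expand]
  have e1 : (Kᵀ *ᵥ x) ⬝ᵥ ((Dᵀ*M*D)⁻¹ *ᵥ (Kᵀ *ᵥ x)) = x ⬝ᵥ ((K * (Dᵀ*M*D)⁻¹ * Kᵀ) *ᵥ x) := by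
    rw [dpml, Matrix.transpose_transpose, Matrix.mulVec_mulVec, Matrix.mulVec_mulVec,
      Matrix.mul_assoc]
  have e2 : (Kᵀ *ᵥ x) ⬝ᵥ v = x ⬝ᵥ (K *ᵥ v) := by
    rw [dpml, Matrix.transpose_transpose]
  have e3 : v ⬝ᵥ (Kᵀ *ᵥ x) = v ⬝ᵥ ((Bᵀ*X + Dᵀ*M*C) *ᵥ x) := by rw [hKT]
  rw [e1, e2, e3, hX'eq]
  simp only [Matrix.add_mulVec, Matrix.sub_mulVec, dotProduct_add, add_dotProduct,
    dotProduct_sub, hK, Matrix.mulVec_add, Matrix.mulVec_sub,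
    ← Matrix.mulVec_mulVec, dpml, Matrix.transpose_mul, Matrix.transpose_transpose, hX, hM]
  ring

lemma wdet_isUnit [DecidableEq m] (D : Matrix p m ℝ) (M : Matrix p p ℝ) (W : Matrix m m ℝ)
    (hMpd : ∀ u : p → ℝ, u ≠ 0 → 0 < u ⬝ᵥ (M *ᵥ u))
    (hD : ∀ u : m → ℝ, D *ᵥ u = 0 → u = 0)
    (hW : Wᵀ*W = Dᵀ*M*D) : IsUnit W.det := by
  have hpd : (Wᵀ*W).PosDef := by
    rw [Matrix.posDef_iff_dotProduct_mulVec]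
    constructor
    · rw [Matrix.IsHermitian, conjTranspose_eq_transpose_of_trivial, Matrix.transpose_mul,
        Matrix.transpose_transpose]
    · intro u hu
      have hDu : D *ᵥ u ≠ 0 := fun h => hu (hD u h)
      have key : u ⬝ᵥ ((Wᵀ*W) *ᵥ u) = (D *ᵥ u) ⬝ᵥ (M *ᵥ (D *ᵥ u)) := by
        rw [hW, ← Matrix.mulVec_mulVec, ← Matrix.mulVec_mulVec, ← dpml]
      have := hMpd _ hDu
      rw [← key] at this
      simpa using this
  have hdet : 0 < (Wᵀ*W).det := hpd.det_pos
  rw [Matrix.det_mul, Matrix.det_transpose] at hdet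
  exact isUnit_iff_ne_zero.mpr (fun h => by rw [h] at hdet; simp at hdet)

end dotAux

section contAux
variable {n m p : Type*} [Fintype n] [Fintype m] [Fintype p] {s : Set ℝ}

lemma contOn_mulVec {A : ℝ → Matrix m n ℝ} {x : ℝ → n → ℝ}
    (hA : ∀ i j, ContinuousOn (fun t => A t i j) s)
    (hx : ∀ j, ContinuousOn (fun t => x t j) s) (i : m) :
    ContinuousOn (fun t => (A t *ᵥ x t) i) s := by
  simp only [Matrix.mulVec, dotProduct]
  exact continuousOn_finset_sum _ (fun j _ => (hA i j).mul (hx j))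

lemma contOn_dot {x y : ℝ → n → ℝ}
    (hx : ∀ j, ContinuousOn (fun t => x t j) s)
    (hy : ∀ j, ContinuousOn (fun t => y t j) s) :
    ContinuousOn (fun t => x t ⬝ᵥ y t) s := by
  simp only [dotProduct]
  exact continuousOn_finset_sum _ (fun j _ => (hx j).mul (hy j))

lemma contOn_matmul {A : ℝ → Matrix m n ℝ} {B : ℝ → Matrix n p ℝ}
    (hA : ∀ i j, ContinuousOn (fun t => A t i j) s)
    (hB : ∀ i j, ContinuousOn (fun t => B t i j) s) (i : m) (j : p) :
    ContinuousOn (fun t => (A t * B t) i j) s := by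
  simp only [Matrix.mul_apply]
  exact continuousOn_finset_sum _ (fun k _ => (hA i k).mul (hB k j))

lemma contOn_det [DecidableEq n] {A : ℝ → Matrix n n ℝ}
    (hA : ∀ i j, ContinuousOn (fun t => A t i j) s) :
    ContinuousOn (fun t => (A t).det) s := by
  simp only [Matrix.det_apply]
  refine continuousOn_finset_sum _ (fun σ _ => ContinuousOn.smul continuousOn_const ?_)
  exact continuousOn_finset_prod _ (fun i _ => hA (σ i) i)

lemma contOn_inv [DecidableEq n] {A : ℝ → Matrix n n ℝ}
    (hA : ∀ i j, ContinuousOn (fun t => A t i j) s)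
    (hdet : ∀ t ∈ s, (A t).det ≠ 0) (i j : n) :
    ContinuousOn (fun t => (A t)⁻¹ i j) s := by
  have key : ∀ t, (A t)⁻¹ i j = ((A t).det)⁻¹ * ((A t).updateRow j (Pi.single i 1)).det := by
    intro t
    rw [Matrix.inv_def, Ring.inverse_eq_inv', ← Matrix.adjugate_apply]
    simp [Matrix.smul_apply]
  simp only [key]
  refine ContinuousOn.mul (ContinuousOn.inv₀ (contOn_det hA) hdet) (contOn_det ?_)
  intro a b
  rcases eq_or_ne a j with rfl | h
  · simp only [Matrix.updateRow_self]; exact continuousOn_const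
  · simp only [Matrix.updateRow_ne h]; exact hA a b

end contAux

section derivAux
variable {n : Type*} [Fintype n]

lemma hasDerivAt_quad {x : ℝ → n → ℝ} {M : ℝ → Matrix n n ℝ}
    {x' : n → ℝ} {M' : Matrix n n ℝ} {t : ℝ}
    (hx : ∀ i, HasDerivAt (fun s => x s i) (x' i) t)
    (hM : ∀ i j, HasDerivAt (fun s => M s i j) (M' i j) t) :
    HasDerivAt (fun s => x s ⬝ᵥ (M s *ᵥ x s))
      (x' ⬝ᵥ (M t *ᵥ x t) + x t ⬝ᵥ (M' *ᵥ x t) + x t ⬝ᵥ (M t *ᵥ x')) t := by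
  have h : ∀ i j, HasDerivAt (fun s => x s i * (M s i j * x s j))
      (x' i * (M t i j * x t j) + x t i * (M' i j * x t j) + x t i * (M t i j * x' j)) t := by
    intro i j
    have := (hx i).fun_mul ((hM i j).fun_mul (hx j))
    exact this.congr_deriv (by ring)
  have hsum : HasDerivAt (fun s => ∑ i, ∑ j, x s i * (M s i j * x s j))
      (∑ i, ∑ j, (x' i * (M t i j * x t j) + x t i * (M' i j * x t j)
        + x t i * (M t i j * x' j))) t := by
    apply HasDerivAt.fun_sum
    intro i _
    exact HasDerivAt.fun_sum (fun j _ => h i j)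
  convert hsum using 1
  · funext s
    simp [dotProduct, Matrix.mulVec, Finset.mul_sum]
  · simp [dotProduct, Matrix.mulVec, Finset.mul_sum, Finset.sum_add_distrib]

end derivAux

section expandAux
variable {nN n1 n2 nv nw nd nzv nzw nI : Type*}
  [Fintype nN] [Fintype n1] [Fintype n2] [Fintype nv] [Fintype nw] [Fintype nd]
  [Fintype nzv] [Fintype nzw] [Fintype nI]
  [DecidableEq nN] [DecidableEq n1] [DecidableEq n2] [DecidableEq nw] [DecidableEq nd]

lemma dlmi_qf_eval
    (AN : Matrix nN nN ℝ) (Bw : Matrix nN nw ℝ) (Bd : Matrix nN nd ℝ)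
    (Cv : Matrix nv nN ℝ) (Dvw : Matrix nv nw ℝ) (Dvd : Matrix nv nd ℝ)
    (CI : Matrix nI nN ℝ) (DIw : Matrix nI nw ℝ) (DId : Matrix nI nd ℝ)
    (A1 : Matrix n1 n1 ℝ) (B1 : Matrix n1 nv ℝ) (C1 : Matrix nzv n1 ℝ) (D1 : Matrix nzv nv ℝ)
    (A2 : Matrix n2 n2 ℝ) (B2 : Matrix n2 nw ℝ) (C2 : Matrix nzw n2 ℝ) (D2 : Matrix nzw nw ℝ)
    (Mv : Matrix nzv nzv ℝ) (Mw : Matrix nzw nzw ℝ)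
    (P P' : Matrix (nN ⊕ (n1 ⊕ n2)) (nN ⊕ (n1 ⊕ n2)) ℝ) (γ ε : ℝ)
    (a : nN → ℝ) (b : n1 → ℝ) (c : n2 → ℝ) (ww : nw → ℝ) (dd : nd → ℝ) :
    (Sum.elim (Sum.elim a (Sum.elim b c)) (Sum.elim ww dd)) ⬝ᵥ
      ((dlmiRob P' P
        (fromBlocks AN 0 (fromRows (B1 * Cv) 0) (fromBlocks A1 0 0 A2))
        (fromRows (fromCols Bw Bd)
          (fromRows (fromCols (B1 * Dvw) (B1 * Dvd)) (fromCols B2 0)))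
        ((fromCols CI (0 : Matrix nI (n1 ⊕ n2) ℝ))ᵀ *
          fromCols CI (0 : Matrix nI (n1 ⊕ n2) ℝ))
        ((fromCols CI (0 : Matrix nI (n1 ⊕ n2) ℝ))ᵀ * fromCols DIw DId)
        ((fromCols DIw DId)ᵀ * fromCols DIw DId -
          γ ^ 2 • fromBlocks (0 : Matrix nw nw ℝ) 0 0 (1 : Matrix nd nd ℝ))
        (fromBlocks (D1 * Cv) (fromCols C1 0) 0 (fromCols 0 C2))
        (fromBlocks (D1 * Dvw) (D1 * Dvd) D2 0)
        (fromBlocks Mv 0 0 (-Mw)) ε) *ᵥ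
        (Sum.elim (Sum.elim a (Sum.elim b c)) (Sum.elim ww dd)))
    = (Sum.elim (AN *ᵥ a + Bw *ᵥ ww + Bd *ᵥ dd)
          (Sum.elim (A1 *ᵥ b + B1 *ᵥ (Cv *ᵥ a + Dvw *ᵥ ww + Dvd *ᵥ dd))
            (A2 *ᵥ c + B2 *ᵥ ww)) ⬝ᵥ (P *ᵥ Sum.elim a (Sum.elim b c))
        + Sum.elim a (Sum.elim b c) ⬝ᵥ (P' *ᵥ Sum.elim a (Sum.elim b c))
        + Sum.elim a (Sum.elim b c) ⬝ᵥ (P *ᵥ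
            Sum.elim (AN *ᵥ a + Bw *ᵥ ww + Bd *ᵥ dd)
              (Sum.elim (A1 *ᵥ b + B1 *ᵥ (Cv *ᵥ a + Dvw *ᵥ ww + Dvd *ᵥ dd))
                (A2 *ᵥ c + B2 *ᵥ ww))))
      + ((CI *ᵥ a + DIw *ᵥ ww + DId *ᵥ dd) ⬝ᵥ (CI *ᵥ a + DIw *ᵥ ww + DId *ᵥ dd)
          - γ ^ 2 * (dd ⬝ᵥ dd))
      + ((C1 *ᵥ b + D1 *ᵥ (Cv *ᵥ a + Dvw *ᵥ ww + Dvd *ᵥ dd)) ⬝ᵥ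
           (Mv *ᵥ (C1 *ᵥ b + D1 *ᵥ (Cv *ᵥ a + Dvw *ᵥ ww + Dvd *ᵥ dd)))
         - (C2 *ᵥ c + D2 *ᵥ ww) ⬝ᵥ (Mw *ᵥ (C2 *ᵥ c + D2 *ᵥ ww)))
      + ε * (Sum.elim a (Sum.elim b c) ⬝ᵥ Sum.elim a (Sum.elim b c)
             + ww ⬝ᵥ ww + dd ⬝ᵥ dd) := by
  set ξ : (nN ⊕ (n1 ⊕ n2)) → ℝ := Sum.elim a (Sum.elim b c) with hξ
  set q : (nw ⊕ nd) → ℝ := Sum.elim ww dd with hq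
  set vv : nv → ℝ := Cv *ᵥ a + Dvw *ᵥ ww + Dvd *ᵥ dd with hvv
  set 𝒜 : Matrix (nN ⊕ (n1 ⊕ n2)) (nN ⊕ (n1 ⊕ n2)) ℝ :=
    fromBlocks AN 0 (fromRows (B1 * Cv) 0) (fromBlocks A1 0 0 A2) with h𝒜
  set ℬ : Matrix (nN ⊕ (n1 ⊕ n2)) (nw ⊕ nd) ℝ :=
    fromRows (fromCols Bw Bd)
      (fromRows (fromCols (B1 * Dvw) (B1 * Dvd)) (fromCols B2 0)) with hℬ
  set ξ' : (nN ⊕ (n1 ⊕ n2)) → ℝ :=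
    Sum.elim (AN *ᵥ a + Bw *ᵥ ww + Bd *ᵥ dd)
      (Sum.elim (A1 *ᵥ b + B1 *ᵥ vv) (A2 *ᵥ c + B2 *ᵥ ww)) with hξ'
  have hdyn : 𝒜 *ᵥ ξ + ℬ *ᵥ q = ξ' := by
    funext i
    rcases i with i | i | i <;>
      simp [h𝒜, hℬ, hξ, hq, hξ', hvv, fromBlocks_mulVec, Matrix.mulVec_add,
        ← Matrix.mulVec_mulVec, Pi.add_apply] <;> ring
  set 𝒞I : Matrix nI (nN ⊕ (n1 ⊕ n2)) ℝ := fromCols CI 0 with h𝒞I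
  set 𝒟I : Matrix nI (nw ⊕ nd) ℝ := fromCols DIw DId with h𝒟I
  set Cz : Matrix (nzv ⊕ nzw) (nN ⊕ (n1 ⊕ n2)) ℝ :=
    fromBlocks (D1 * Cv) (fromCols C1 0) 0 (fromCols 0 C2) with hCz
  set Dz : Matrix (nzv ⊕ nzw) (nw ⊕ nd) ℝ := fromBlocks (D1 * Dvw) (D1 * Dvd) D2 0 with hDz
  set zv : nzv → ℝ := C1 *ᵥ b + D1 *ᵥ vv with hzv
  set zw : nzw → ℝ := C2 *ᵥ c + D2 *ᵥ ww with hzw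
  have h𝒞Iξ : 𝒞I *ᵥ ξ = CI *ᵥ a := by
    rw [h𝒞I, hξ, fromCols_mulVec_sumElim, Matrix.zero_mulVec, add_zero]
  have h𝒟Iq : 𝒟I *ᵥ q = DIw *ᵥ ww + DId *ᵥ dd := by
    rw [h𝒟I, hq, fromCols_mulVec_sumElim]
  have hz : Cz *ᵥ ξ + Dz *ᵥ q = Sum.elim zv zw := by
    funext i
    rcases i with i | i <;>
      simp [hCz, hDz, hξ, hq, hzv, hzw, hvv, fromBlocks_mulVec, Matrix.mulVec_add,
        ← Matrix.mulVec_mulVec, Pi.add_apply] <;> ring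
  unfold dlmiRob
  rw [Matrix.add_mulVec, Matrix.add_mulVec, Matrix.add_mulVec,
    dotProduct_add, dotProduct_add, dotProduct_add]
  have h1 : Sum.elim ξ q ⬝ᵥ
      (fromBlocks (P' + 𝒜ᵀ * P + P * 𝒜) (P * ℬ) (ℬᵀ * P) 0 *ᵥ Sum.elim ξ q)
      = ξ' ⬝ᵥ (P *ᵥ ξ) + ξ ⬝ᵥ (P' *ᵥ ξ) + ξ ⬝ᵥ (P *ᵥ ξ') := by
    rw [qf_blocks, ← hdyn]
    simp only [Matrix.add_mulVec, Matrix.mulVec_add, add_dotProduct, dotProduct_add,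
      Matrix.zero_mulVec, dotProduct_zero, ← Matrix.mulVec_mulVec, dpml]
    ring
  have h2 : Sum.elim ξ q ⬝ᵥ
      (fromBlocks (𝒞Iᵀ * 𝒞I) (𝒞Iᵀ * 𝒟I)
        (𝒞Iᵀ * 𝒟I)ᵀ (𝒟Iᵀ * 𝒟I - γ ^ 2 • fromBlocks (0 : Matrix nw nw ℝ) 0 0 1)
        *ᵥ Sum.elim ξ q)
      = (CI *ᵥ a + DIw *ᵥ ww + DId *ᵥ dd) ⬝ᵥ (CI *ᵥ a + DIw *ᵥ ww + DId *ᵥ dd)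
        - γ ^ 2 * (dd ⬝ᵥ dd) := by
    have hcomb : CI *ᵥ a + DIw *ᵥ ww + DId *ᵥ dd = 𝒞I *ᵥ ξ + 𝒟I *ᵥ q := by
      rw [h𝒞Iξ, h𝒟Iq, add_assoc]
    rw [qf_blocks, hcomb]
    have hqblk : q ⬝ᵥ ((fromBlocks (0 : Matrix nw nw ℝ) 0 0 1) *ᵥ q) = dd ⬝ᵥ dd := by
      rw [hq, qf_blocks]
      simp [Matrix.one_mulVec]
    rw [Matrix.transpose_mul, Matrix.transpose_transpose, Matrix.sub_mulVec,
      dotProduct_sub, Matrix.smul_mulVec, dotProduct_smul, hqblk]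
    simp only [dotProduct_add, add_dotProduct, ← Matrix.mulVec_mulVec, dpml, smul_eq_mul]
    ring
  have h3 : Sum.elim ξ q ⬝ᵥ
      (((fromCols Cz Dz)ᵀ * fromBlocks Mv 0 0 (-Mw) * fromCols Cz Dz) *ᵥ Sum.elim ξ q)
      = zv ⬝ᵥ (Mv *ᵥ zv) - zw ⬝ᵥ (Mw *ᵥ zw) := by
    rw [← Matrix.mulVec_mulVec, ← Matrix.mulVec_mulVec, ← dpml,
      fromCols_mulVec_sumElim, hz, qf_blocks]
    simp [Matrix.neg_mulVec]
    ring
  have h4 : Sum.elim ξ q ⬝ᵥ ((ε • (1 : Matrix ((nN ⊕ (n1 ⊕ n2)) ⊕ (nw ⊕ nd))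
        ((nN ⊕ (n1 ⊕ n2)) ⊕ (nw ⊕ nd)) ℝ)) *ᵥ Sum.elim ξ q)
      = ε * (ξ ⬝ᵥ ξ + ww ⬝ᵥ ww + dd ⬝ᵥ dd) := by
    rw [Matrix.smul_mulVec, Matrix.one_mulVec, dotProduct_smul, smul_eq_mul]
    have hqq : q ⬝ᵥ q = ww ⬝ᵥ ww + dd ⬝ᵥ dd := by
      rw [hq, sumElim_dotProduct_sumElim]
    rw [sumElim_dotProduct_sumElim, hqq]
    ring
  rw [h1, h2, h3, h4]

end expandAux

end auxiliary

/-- the scaled-plant nominal performance bound. If the robust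
performance differential LMI holds for the extended system of plant `N` and
block-diagonal IQC filter `Ψ = diag(Ψ_v, Ψ_w)` with `M = diag(M_v, -M_w)`, then the
scaled signals `ṽ, w̃` (from the finite-horizon factorization) and `d̃ = γ d` satisfy
`‖e_E(T)‖² + ∫(‖ṽ‖² + ‖e_I‖²) ≤ ∫‖w̃‖² + (1 - ε/γ²)∫‖d̃‖²`. -/
theorem scaled_plant_nominal_performance
    {nN n1 n2 nv nw nd nzv nzw nI nE : ℕ} {T : ℝ} (hT : 0 < T)
    -- plant N
    (AN : ℝ → Matrix (Fin nN) (Fin nN) ℝ)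
    (Bw : ℝ → Matrix (Fin nN) (Fin nw) ℝ)
    (Bd : ℝ → Matrix (Fin nN) (Fin nd) ℝ)
    (Cv : ℝ → Matrix (Fin nv) (Fin nN) ℝ)
    (Dvw : ℝ → Matrix (Fin nv) (Fin nw) ℝ)
    (Dvd : ℝ → Matrix (Fin nv) (Fin nd) ℝ)
    (CI : ℝ → Matrix (Fin nI) (Fin nN) ℝ)
    (DIw : ℝ → Matrix (Fin nI) (Fin nw) ℝ)
    (DId : ℝ → Matrix (Fin nI) (Fin nd) ℝ)
    (CE : ℝ → Matrix (Fin nE) (Fin nN) ℝ)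
    -- IQC filter blocks Ψ_v, Ψ_w
    (A1 : ℝ → Matrix (Fin n1) (Fin n1) ℝ) (B1 : ℝ → Matrix (Fin n1) (Fin nv) ℝ)
    (C1 : ℝ → Matrix (Fin nzv) (Fin n1) ℝ) (D1 : ℝ → Matrix (Fin nzv) (Fin nv) ℝ)
    (A2 : ℝ → Matrix (Fin n2) (Fin n2) ℝ) (B2 : ℝ → Matrix (Fin n2) (Fin nw) ℝ)
    (C2 : ℝ → Matrix (Fin nzw) (Fin n2) ℝ) (D2 : ℝ → Matrix (Fin nzw) (Fin nw) ℝ)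
    (hAN : ∀ i j, ContinuousOn (fun t => AN t i j) (Icc 0 T))
    (hBw : ∀ i j, ContinuousOn (fun t => Bw t i j) (Icc 0 T))
    (hBd : ∀ i j, ContinuousOn (fun t => Bd t i j) (Icc 0 T))
    (hCv : ∀ i j, ContinuousOn (fun t => Cv t i j) (Icc 0 T))
    (hDvw : ∀ i j, ContinuousOn (fun t => Dvw t i j) (Icc 0 T))
    (hDvd : ∀ i j, ContinuousOn (fun t => Dvd t i j) (Icc 0 T))
    (hCI : ∀ i j, ContinuousOn (fun t => CI t i j) (Icc 0 T))
    (hDIw : ∀ i j, ContinuousOn (fun t => DIw t i j) (Icc 0 T))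
    (hDId : ∀ i j, ContinuousOn (fun t => DId t i j) (Icc 0 T))
    (hCE : ∀ i j, ContinuousOn (fun t => CE t i j) (Icc 0 T))
    (hA1 : ∀ i j, ContinuousOn (fun t => A1 t i j) (Icc 0 T))
    (hB1 : ∀ i j, ContinuousOn (fun t => B1 t i j) (Icc 0 T))
    (hC1 : ∀ i j, ContinuousOn (fun t => C1 t i j) (Icc 0 T))
    (hD1 : ∀ i j, ContinuousOn (fun t => D1 t i j) (Icc 0 T))
    (hA2 : ∀ i j, ContinuousOn (fun t => A2 t i j) (Icc 0 T))
    (hB2 : ∀ i j, ContinuousOn (fun t => B2 t i j) (Icc 0 T))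
    (hC2 : ∀ i j, ContinuousOn (fun t => C2 t i j) (Icc 0 T))
    (hD2 : ∀ i j, ContinuousOn (fun t => D2 t i j) (Icc 0 T))
    -- full column rank of D₁, D₂
    (hD1rank : ∀ t ∈ Icc (0:ℝ) T, ∀ u : Fin nv → ℝ, D1 t *ᵥ u = 0 → u = 0)
    (hD2rank : ∀ t ∈ Icc (0:ℝ) T, ∀ u : Fin nw → ℝ, D2 t *ᵥ u = 0 → u = 0)
    -- IQC multipliers M_v ≻ 0, M_w ≻ 0
    (Mv : ℝ → Matrix (Fin nzv) (Fin nzv) ℝ) (Mw : ℝ → Matrix (Fin nzw) (Fin nzw) ℝ)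
    (hMvcont : ∀ i j, ContinuousOn (fun t => Mv t i j) (Icc 0 T))
    (hMwcont : ∀ i j, ContinuousOn (fun t => Mw t i j) (Icc 0 T))
    (hMvsym : ∀ t ∈ Icc (0:ℝ) T, (Mv t)ᵀ = Mv t)
    (hMwsym : ∀ t ∈ Icc (0:ℝ) T, (Mw t)ᵀ = Mw t)
    (hMvpd : ∀ t ∈ Icc (0:ℝ) T, ∀ u : Fin nzv → ℝ, u ≠ 0 → 0 < u ⬝ᵥ (Mv t *ᵥ u))
    (hMwpd : ∀ t ∈ Icc (0:ℝ) T, ∀ u : Fin nzw → ℝ, u ≠ 0 → 0 < u ⬝ᵥ (Mw t *ᵥ u))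
    (ε γ : ℝ) (hε : 0 < ε) (hγ : 0 < γ)
    -- storage matrix P for the extended system
    (P P' : ℝ → Matrix (Fin nN ⊕ (Fin n1 ⊕ Fin n2)) (Fin nN ⊕ (Fin n1 ⊕ Fin n2)) ℝ)
    (hPsym : ∀ t ∈ Icc (0:ℝ) T, (P t)ᵀ = P t)
    (hPderiv : ∀ t ∈ Icc (0:ℝ) T, ∀ i j, HasDerivAt (fun s => P s i j) (P' t i j) t)
    (hP'cont : ∀ i j, ContinuousOn (fun t => P' t i j) (Icc 0 T))
    -- terminal condition P(T) - 𝒞_E(T)ᵀ𝒞_E(T) ⪰ 0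
    (hPT : ∀ u : (Fin nN ⊕ (Fin n1 ⊕ Fin n2)) → ℝ,
      0 ≤ u ⬝ᵥ ((P T -
        (fromCols (CE T) (0 : Matrix (Fin nE) (Fin n1 ⊕ Fin n2) ℝ))ᵀ *
          fromCols (CE T) (0 : Matrix (Fin nE) (Fin n1 ⊕ Fin n2) ℝ)) *ᵥ u))
    -- the robust-performance differential LMI for the extended system
    (hDLMI : ∀ t ∈ Icc (0:ℝ) T,
      ∀ u : ((Fin nN ⊕ (Fin n1 ⊕ Fin n2)) ⊕ (Fin nw ⊕ Fin nd)) → ℝ,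
      u ⬝ᵥ ((dlmiRob (P' t) (P t)
        (fromBlocks (AN t) 0 (fromRows (B1 t * Cv t) 0)
          (fromBlocks (A1 t) 0 0 (A2 t)))
        (fromRows (fromCols (Bw t) (Bd t))
          (fromRows (fromCols (B1 t * Dvw t) (B1 t * Dvd t))
            (fromCols (B2 t) 0)))
        ((fromCols (CI t) (0 : Matrix (Fin nI) (Fin n1 ⊕ Fin n2) ℝ))ᵀ *
          fromCols (CI t) (0 : Matrix (Fin nI) (Fin n1 ⊕ Fin n2) ℝ))
        ((fromCols (CI t) (0 : Matrix (Fin nI) (Fin n1 ⊕ Fin n2) ℝ))ᵀ *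
          fromCols (DIw t) (DId t))
        ((fromCols (DIw t) (DId t))ᵀ * fromCols (DIw t) (DId t) -
          γ ^ 2 • fromBlocks (0 : Matrix (Fin nw) (Fin nw) ℝ) 0 0
            (1 : Matrix (Fin nd) (Fin nd) ℝ))
        (fromBlocks (D1 t * Cv t) (fromCols (C1 t) 0) 0 (fromCols 0 (C2 t)))
        (fromBlocks (D1 t * Dvw t) (D1 t * Dvd t) (D2 t) 0)
        (fromBlocks (Mv t) 0 0 (-(Mw t))) ε) *ᵥ u) ≤ 0)
    -- factorization Riccati solutions with zero terminal conditions
    (Xv Xv' : ℝ → Matrix (Fin n1) (Fin n1) ℝ)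
    (hXvsym : ∀ t ∈ Icc (0:ℝ) T, (Xv t)ᵀ = Xv t)
    (hXvderiv : ∀ t ∈ Icc (0:ℝ) T, ∀ i j, HasDerivAt (fun s => Xv s i j) (Xv' t i j) t)
    (hXv'cont : ∀ i j, ContinuousOn (fun t => Xv' t i j) (Icc 0 T))
    (hXvT : Xv T = 0)
    (hXvRDE : ∀ t ∈ Icc (0:ℝ) T,
      Xv' t + (A1 t)ᵀ * Xv t + Xv t * A1 t + (C1 t)ᵀ * Mv t * C1 t -
        (Xv t * B1 t + (C1 t)ᵀ * Mv t * D1 t) * ((D1 t)ᵀ * Mv t * D1 t)⁻¹ *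
          (Xv t * B1 t + (C1 t)ᵀ * Mv t * D1 t)ᵀ = 0)
    (Xw Xw' : ℝ → Matrix (Fin n2) (Fin n2) ℝ)
    (hXwsym : ∀ t ∈ Icc (0:ℝ) T, (Xw t)ᵀ = Xw t)
    (hXwderiv : ∀ t ∈ Icc (0:ℝ) T, ∀ i j, HasDerivAt (fun s => Xw s i j) (Xw' t i j) t)
    (hXw'cont : ∀ i j, ContinuousOn (fun t => Xw' t i j) (Icc 0 T))
    (hXwT : Xw T = 0)
    (hXwRDE : ∀ t ∈ Icc (0:ℝ) T,
      Xw' t + (A2 t)ᵀ * Xw t + Xw t * A2 t + (C2 t)ᵀ * Mw t * C2 t -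
        (Xw t * B2 t + (C2 t)ᵀ * Mw t * D2 t) * ((D2 t)ᵀ * Mw t * D2 t)⁻¹ *
          (Xw t * B2 t + (C2 t)ᵀ * Mw t * D2 t)ᵀ = 0)
    -- continuous square roots W_v, W_w
    (Wv : ℝ → Matrix (Fin nv) (Fin nv) ℝ) (Ww : ℝ → Matrix (Fin nw) (Fin nw) ℝ)
    (hWvcont : ∀ i j, ContinuousOn (fun t => Wv t i j) (Icc 0 T))
    (hWwcont : ∀ i j, ContinuousOn (fun t => Ww t i j) (Icc 0 T))
    (hWv : ∀ t ∈ Icc (0:ℝ) T, (Wv t)ᵀ * Wv t = (D1 t)ᵀ * Mv t * D1 t)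
    (hWw : ∀ t ∈ Icc (0:ℝ) T, (Ww t)ᵀ * Ww t = (D2 t)ᵀ * Mw t * D2 t) :
    -- conclusion: scaled nominal performance bound for every zero-IC trajectory
    ∀ (w : ℝ → Fin nw → ℝ) (d : ℝ → Fin nd → ℝ)
      (xN : ℝ → Fin nN → ℝ) (xv : ℝ → Fin n1 → ℝ) (xw : ℝ → Fin n2 → ℝ),
      (∀ i, ContinuousOn (fun t => w t i) (Icc 0 T)) →
      (∀ i, ContinuousOn (fun t => d t i) (Icc 0 T)) →
      xN 0 = 0 → xv 0 = 0 → xw 0 = 0 →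
      (∀ t ∈ Icc (0:ℝ) T, ∀ i,
        HasDerivAt (fun s => xN s i)
          ((AN t *ᵥ xN t + Bw t *ᵥ w t + Bd t *ᵥ d t) i) t) →
      (∀ t ∈ Icc (0:ℝ) T, ∀ i,
        HasDerivAt (fun s => xv s i)
          ((A1 t *ᵥ xv t +
            B1 t *ᵥ (Cv t *ᵥ xN t + Dvw t *ᵥ w t + Dvd t *ᵥ d t)) i) t) →
      (∀ t ∈ Icc (0:ℝ) T, ∀ i,
        HasDerivAt (fun s => xw s i)
          ((A2 t *ᵥ xw t + B2 t *ᵥ w t) i) t) →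
      (CE T *ᵥ xN T) ⬝ᵥ (CE T *ᵥ xN T) +
        (∫ t in (0:ℝ)..T,
          ((((Wv t)ᵀ)⁻¹ *ᵥ (((B1 t)ᵀ * Xv t + (D1 t)ᵀ * Mv t * C1 t) *ᵥ xv t) +
              Wv t *ᵥ (Cv t *ᵥ xN t + Dvw t *ᵥ w t + Dvd t *ᵥ d t)) ⬝ᵥ
           (((Wv t)ᵀ)⁻¹ *ᵥ (((B1 t)ᵀ * Xv t + (D1 t)ᵀ * Mv t * C1 t) *ᵥ xv t) +
              Wv t *ᵥ (Cv t *ᵥ xN t + Dvw t *ᵥ w t + Dvd t *ᵥ d t)) +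
           (CI t *ᵥ xN t + DIw t *ᵥ w t + DId t *ᵥ d t) ⬝ᵥ
             (CI t *ᵥ xN t + DIw t *ᵥ w t + DId t *ᵥ d t))) ≤
      (∫ t in (0:ℝ)..T,
        (((Ww t)ᵀ)⁻¹ *ᵥ (((B2 t)ᵀ * Xw t + (D2 t)ᵀ * Mw t * C2 t) *ᵥ xw t) +
            Ww t *ᵥ w t) ⬝ᵥ
          (((Ww t)ᵀ)⁻¹ *ᵥ (((B2 t)ᵀ * Xw t + (D2 t)ᵀ * Mw t * C2 t) *ᵥ xw t) +
            Ww t *ᵥ w t)) +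
        (1 - ε / γ ^ 2) * ∫ t in (0:ℝ)..T, (γ • d t) ⬝ᵥ (γ • d t) := by
  intro w d xN xv xw hw hd hxN0 hxv0 hxw0 hxN' hxv' hxw'
  have hIcc : Set.uIcc (0:ℝ) T = Set.Icc 0 T := Set.uIcc_of_le hT.le
  -- continuity of the trajectories and differentiable matrix functions
  have hxNc : ∀ i, ContinuousOn (fun t => xN t i) (Set.Icc 0 T) :=
    fun i t ht => (hxN' t ht i).continuousAt.continuousWithinAt
  have hxvc : ∀ i, ContinuousOn (fun t => xv t i) (Set.Icc 0 T) :=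
    fun i t ht => (hxv' t ht i).continuousAt.continuousWithinAt
  have hxwc : ∀ i, ContinuousOn (fun t => xw t i) (Set.Icc 0 T) :=
    fun i t ht => (hxw' t ht i).continuousAt.continuousWithinAt
  have hPc : ∀ i j, ContinuousOn (fun t => P t i j) (Set.Icc 0 T) :=
    fun i j t ht => (hPderiv t ht i j).continuousAt.continuousWithinAt
  have hXvc : ∀ i j, ContinuousOn (fun t => Xv t i j) (Set.Icc 0 T) :=
    fun i j t ht => (hXvderiv t ht i j).continuousAt.continuousWithinAt
  have hXwc : ∀ i j, ContinuousOn (fun t => Xw t i j) (Set.Icc 0 T) :=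
    fun i j t ht => (hXwderiv t ht i j).continuousAt.continuousWithinAt
  -- invertibility of Wv, Ww
  have hWvU : ∀ t ∈ Set.Icc (0:ℝ) T, IsUnit (Wv t).det :=
    fun t ht => wdet_isUnit (D1 t) (Mv t) (Wv t) (hMvpd t ht) (hD1rank t ht) (hWv t ht)
  have hWwU : ∀ t ∈ Set.Icc (0:ℝ) T, IsUnit (Ww t).det :=
    fun t ht => wdet_isUnit (D2 t) (Mw t) (Ww t) (hMwpd t ht) (hD2rank t ht) (hWw t ht)
  -- continuity of inverse transposes
  have hWvIc : ∀ i j, ContinuousOn (fun t => ((Wv t)ᵀ)⁻¹ i j) (Set.Icc 0 T) := by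
    refine contOn_inv (fun i j => hWvcont j i) ?_
    intro t ht
    rw [Matrix.det_transpose]
    exact (hWvU t ht).ne_zero
  have hWwIc : ∀ i j, ContinuousOn (fun t => ((Ww t)ᵀ)⁻¹ i j) (Set.Icc 0 T) := by
    refine contOn_inv (fun i j => hWwcont j i) ?_
    intro t ht
    rw [Matrix.det_transpose]
    exact (hWwU t ht).ne_zero
  -- the extended state and its derivative
  set ξ : ℝ → (Fin nN ⊕ (Fin n1 ⊕ Fin n2)) → ℝ :=
    fun t => Sum.elim (xN t) (Sum.elim (xv t) (xw t)) with hξdef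
  set ξ' : ℝ → (Fin nN ⊕ (Fin n1 ⊕ Fin n2)) → ℝ :=
    fun t => Sum.elim (AN t *ᵥ xN t + Bw t *ᵥ w t + Bd t *ᵥ d t)
      (Sum.elim (A1 t *ᵥ xv t + B1 t *ᵥ (Cv t *ᵥ xN t + Dvw t *ᵥ w t + Dvd t *ᵥ d t))
        (A2 t *ᵥ xw t + B2 t *ᵥ w t)) with hξ'def
  set V : ℝ → ℝ := fun t => ξ t ⬝ᵥ (P t *ᵥ ξ t) - xv t ⬝ᵥ (Xv t *ᵥ xv t)
    + xw t ⬝ᵥ (Xw t *ᵥ xw t) with hVdef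
  set V' : ℝ → ℝ := fun t =>
    (ξ' t ⬝ᵥ (P t *ᵥ ξ t) + ξ t ⬝ᵥ (P' t *ᵥ ξ t) + ξ t ⬝ᵥ (P t *ᵥ ξ' t))
    - ((A1 t *ᵥ xv t + B1 t *ᵥ (Cv t *ᵥ xN t + Dvw t *ᵥ w t + Dvd t *ᵥ d t)) ⬝ᵥ (Xv t *ᵥ xv t)
       + xv t ⬝ᵥ (Xv' t *ᵥ xv t)
       + xv t ⬝ᵥ (Xv t *ᵥ (A1 t *ᵥ xv t
           + B1 t *ᵥ (Cv t *ᵥ xN t + Dvw t *ᵥ w t + Dvd t *ᵥ d t))))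
    + ((A2 t *ᵥ xw t + B2 t *ᵥ w t) ⬝ᵥ (Xw t *ᵥ xw t) + xw t ⬝ᵥ (Xw' t *ᵥ xw t)
       + xw t ⬝ᵥ (Xw t *ᵥ (A2 t *ᵥ xw t + B2 t *ᵥ w t))) with hV'def
  -- V has derivative V'
  have hVderiv : ∀ t ∈ Set.Icc (0:ℝ) T, HasDerivAt V (V' t) t := by
    intro t ht
    have hP1 : HasDerivAt (fun s => ξ s ⬝ᵥ (P s *ᵥ ξ s))
        (ξ' t ⬝ᵥ (P t *ᵥ ξ t) + ξ t ⬝ᵥ (P' t *ᵥ ξ t) + ξ t ⬝ᵥ (P t *ᵥ ξ' t)) t := by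
      refine hasDerivAt_quad ?_ (fun i j => hPderiv t ht i j)
      rintro (i | i | i)
      · exact hxN' t ht i
      · exact hxv' t ht i
      · exact hxw' t ht i
    have hP2 : HasDerivAt (fun s => xv s ⬝ᵥ (Xv s *ᵥ xv s))
        ((A1 t *ᵥ xv t + B1 t *ᵥ (Cv t *ᵥ xN t + Dvw t *ᵥ w t + Dvd t *ᵥ d t)) ⬝ᵥ
            (Xv t *ᵥ xv t)
          + xv t ⬝ᵥ (Xv' t *ᵥ xv t)
          + xv t ⬝ᵥ (Xv t *ᵥ (A1 t *ᵥ xv t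
              + B1 t *ᵥ (Cv t *ᵥ xN t + Dvw t *ᵥ w t + Dvd t *ᵥ d t)))) t :=
      hasDerivAt_quad (fun i => hxv' t ht i) (fun i j => hXvderiv t ht i j)
    have hP3 : HasDerivAt (fun s => xw s ⬝ᵥ (Xw s *ᵥ xw s))
        ((A2 t *ᵥ xw t + B2 t *ᵥ w t) ⬝ᵥ (Xw t *ᵥ xw t) + xw t ⬝ᵥ (Xw' t *ᵥ xw t)
          + xw t ⬝ᵥ (Xw t *ᵥ (A2 t *ᵥ xw t + B2 t *ᵥ w t))) t :=
      hasDerivAt_quad (fun i => hxw' t ht i) (fun i j => hXwderiv t ht i j)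
    exact (hP1.sub hP2).add hP3
  -- the pointwise dissipation inequality
  have hkey : ∀ t ∈ Set.Icc (0:ℝ) T,
      (((Wv t)ᵀ)⁻¹ *ᵥ (((B1 t)ᵀ * Xv t + (D1 t)ᵀ * Mv t * C1 t) *ᵥ xv t) + Wv t *ᵥ (Cv t *ᵥ xN t + Dvw t *ᵥ w t + Dvd t *ᵥ d t)) ⬝ᵥ
        (((Wv t)ᵀ)⁻¹ *ᵥ (((B1 t)ᵀ * Xv t + (D1 t)ᵀ * Mv t * C1 t) *ᵥ xv t) + Wv t *ᵥ (Cv t *ᵥ xN t + Dvw t *ᵥ w t + Dvd t *ᵥ d t)) +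
        (CI t *ᵥ xN t + DIw t *ᵥ w t + DId t *ᵥ d t) ⬝ᵥ (CI t *ᵥ xN t + DIw t *ᵥ w t + DId t *ᵥ d t) + V' t ≤
      (((Ww t)ᵀ)⁻¹ *ᵥ (((B2 t)ᵀ * Xw t + (D2 t)ᵀ * Mw t * C2 t) *ᵥ xw t) + Ww t *ᵥ w t) ⬝ᵥ
        (((Ww t)ᵀ)⁻¹ *ᵥ (((B2 t)ᵀ * Xw t + (D2 t)ᵀ * Mw t * C2 t) *ᵥ xw t) + Ww t *ᵥ w t) + (γ ^ 2 - ε) * (d t ⬝ᵥ d t) := by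
    intro t ht
    have h1 := hDLMI t ht (Sum.elim (ξ t) (Sum.elim (w t) (d t)))
    simp only [hξdef] at h1
    rw [dlmi_qf_eval] at h1
    have hcv := completion (Xv t) (Xv' t) (A1 t) (B1 t) (C1 t) (D1 t) (Mv t) (Wv t)
      (hXvsym t ht) (hMvsym t ht) (hWv t ht) (hWvU t ht) (hXvRDE t ht) (xv t)
      (Cv t *ᵥ xN t + Dvw t *ᵥ w t + Dvd t *ᵥ d t)
    have hcw := completion (Xw t) (Xw' t) (A2 t) (B2 t) (C2 t) (D2 t) (Mw t) (Ww t)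
      (hXwsym t ht) (hMwsym t ht) (hWw t ht) (hWwU t ht) (hXwRDE t ht) (xw t) (w t)
    have hε1 : 0 ≤ ε * (Sum.elim (xN t) (Sum.elim (xv t) (xw t)) ⬝ᵥ
        Sum.elim (xN t) (Sum.elim (xv t) (xw t))) := mul_nonneg hε.le (dp_self_nonneg _)
    have hε2 : 0 ≤ ε * (w t ⬝ᵥ w t) := mul_nonneg hε.le (dp_self_nonneg _)
    simp only [hV'def, hξ'def, hξdef]
    nlinarith [h1, hcv, hcw, hε1, hε2]
  -- continuity of the integrands
  have hvvc : ∀ i, ContinuousOn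
      (fun t => (Cv t *ᵥ xN t + Dvw t *ᵥ w t + Dvd t *ᵥ d t) i) (Set.Icc 0 T) :=
    fun i => ((contOn_mulVec hCv hxNc i).add (contOn_mulVec hDvw hw i)).add
      (contOn_mulVec hDvd hd i)
  have heIc : ∀ i, ContinuousOn
      (fun t => (CI t *ᵥ xN t + DIw t *ᵥ w t + DId t *ᵥ d t) i) (Set.Icc 0 T) :=
    fun i => ((contOn_mulVec hCI hxNc i).add (contOn_mulVec hDIw hw i)).add
      (contOn_mulVec hDId hd i)
  have hKvc : ∀ i j, ContinuousOn
      (fun t => ((B1 t)ᵀ * Xv t + (D1 t)ᵀ * Mv t * C1 t) i j) (Set.Icc 0 T) :=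
    fun i j => (contOn_matmul (fun i j => hB1 j i) hXvc i j).add
      (contOn_matmul (contOn_matmul (fun i j => hD1 j i) hMvcont) hC1 i j)
  have hKwc : ∀ i j, ContinuousOn
      (fun t => ((B2 t)ᵀ * Xw t + (D2 t)ᵀ * Mw t * C2 t) i j) (Set.Icc 0 T) :=
    fun i j => (contOn_matmul (fun i j => hB2 j i) hXwc i j).add
      (contOn_matmul (contOn_matmul (fun i j => hD2 j i) hMwcont) hC2 i j)
  have hsvc : ∀ i, ContinuousOn (fun t =>
      (((Wv t)ᵀ)⁻¹ *ᵥ (((B1 t)ᵀ * Xv t + (D1 t)ᵀ * Mv t * C1 t) *ᵥ xv t) +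
        Wv t *ᵥ (Cv t *ᵥ xN t + Dvw t *ᵥ w t + Dvd t *ᵥ d t)) i) (Set.Icc 0 T) :=
    fun i => (contOn_mulVec hWvIc (contOn_mulVec hKvc hxvc) i).add
      (contOn_mulVec hWvcont hvvc i)
  have hswc : ∀ i, ContinuousOn (fun t =>
      (((Ww t)ᵀ)⁻¹ *ᵥ (((B2 t)ᵀ * Xw t + (D2 t)ᵀ * Mw t * C2 t) *ᵥ xw t) +
        Ww t *ᵥ w t) i) (Set.Icc 0 T) :=
    fun i => (contOn_mulVec hWwIc (contOn_mulVec hKwc hxwc) i).add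
      (contOn_mulVec hWwcont hw i)
  have hξc : ∀ i, ContinuousOn (fun t => ξ t i) (Set.Icc 0 T) := by
    rintro (i | i | i)
    · exact hxNc i
    · exact hxvc i
    · exact hxwc i
  have hξ'c : ∀ i, ContinuousOn (fun t => ξ' t i) (Set.Icc 0 T) := by
    rintro (i | i | i)
    · exact ((contOn_mulVec hAN hxNc i).add (contOn_mulVec hBw hw i)).add
        (contOn_mulVec hBd hd i)
    · exact (contOn_mulVec hA1 hxvc i).add (contOn_mulVec hB1 hvvc i)
    · exact (contOn_mulVec hA2 hxwc i).add (contOn_mulVec hB2 hw i)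
  have hdxvc : ∀ i, ContinuousOn (fun t =>
      (A1 t *ᵥ xv t + B1 t *ᵥ (Cv t *ᵥ xN t + Dvw t *ᵥ w t + Dvd t *ᵥ d t)) i)
      (Set.Icc 0 T) :=
    fun i => (contOn_mulVec hA1 hxvc i).add (contOn_mulVec hB1 hvvc i)
  have hdxwc : ∀ i, ContinuousOn (fun t => (A2 t *ᵥ xw t + B2 t *ᵥ w t) i) (Set.Icc 0 T) :=
    fun i => (contOn_mulVec hA2 hxwc i).add (contOn_mulVec hB2 hw i)
  have hV'c : ContinuousOn V' (Set.Icc 0 T) := by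
    refine ContinuousOn.add (ContinuousOn.sub ?_ ?_) ?_
    · exact ((contOn_dot hξ'c (contOn_mulVec hPc hξc)).add
        (contOn_dot hξc (contOn_mulVec hP'cont hξc))).add
        (contOn_dot hξc (contOn_mulVec hPc hξ'c))
    · exact ((contOn_dot hdxvc (contOn_mulVec hXvc hxvc)).add
        (contOn_dot hxvc (contOn_mulVec hXv'cont hxvc))).add
        (contOn_dot hxvc (contOn_mulVec hXvc hdxvc))
    · exact ((contOn_dot hdxwc (contOn_mulVec hXwc hxwc)).add
        (contOn_dot hxwc (contOn_mulVec hXw'cont hxwc))).add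
        (contOn_dot hxwc (contOn_mulVec hXwc hdxwc))
  have hFc : ContinuousOn (fun t =>
      ((((Wv t)ᵀ)⁻¹ *ᵥ (((B1 t)ᵀ * Xv t + (D1 t)ᵀ * Mv t * C1 t) *ᵥ xv t) +
          Wv t *ᵥ (Cv t *ᵥ xN t + Dvw t *ᵥ w t + Dvd t *ᵥ d t)) ⬝ᵥ
       (((Wv t)ᵀ)⁻¹ *ᵥ (((B1 t)ᵀ * Xv t + (D1 t)ᵀ * Mv t * C1 t) *ᵥ xv t) +
          Wv t *ᵥ (Cv t *ᵥ xN t + Dvw t *ᵥ w t + Dvd t *ᵥ d t)) +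
       (CI t *ᵥ xN t + DIw t *ᵥ w t + DId t *ᵥ d t) ⬝ᵥ
         (CI t *ᵥ xN t + DIw t *ᵥ w t + DId t *ᵥ d t))) (Set.Icc 0 T) :=
    (contOn_dot hsvc hsvc).add (contOn_dot heIc heIc)
  have hGc : ContinuousOn (fun t =>
      (((Ww t)ᵀ)⁻¹ *ᵥ (((B2 t)ᵀ * Xw t + (D2 t)ᵀ * Mw t * C2 t) *ᵥ xw t) +
          Ww t *ᵥ w t) ⬝ᵥ
        (((Ww t)ᵀ)⁻¹ *ᵥ (((B2 t)ᵀ * Xw t + (D2 t)ᵀ * Mw t * C2 t) *ᵥ xw t) +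
          Ww t *ᵥ w t)) (Set.Icc 0 T) := contOn_dot hswc hswc
  have hdc : ContinuousOn (fun t => d t ⬝ᵥ d t) (Set.Icc 0 T) := contOn_dot hd hd
  -- interval integrability
  have hFint : IntervalIntegrable (fun t =>
      ((((Wv t)ᵀ)⁻¹ *ᵥ (((B1 t)ᵀ * Xv t + (D1 t)ᵀ * Mv t * C1 t) *ᵥ xv t) +
          Wv t *ᵥ (Cv t *ᵥ xN t + Dvw t *ᵥ w t + Dvd t *ᵥ d t)) ⬝ᵥ
       (((Wv t)ᵀ)⁻¹ *ᵥ (((B1 t)ᵀ * Xv t + (D1 t)ᵀ * Mv t * C1 t) *ᵥ xv t) +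
          Wv t *ᵥ (Cv t *ᵥ xN t + Dvw t *ᵥ w t + Dvd t *ᵥ d t)) +
       (CI t *ᵥ xN t + DIw t *ᵥ w t + DId t *ᵥ d t) ⬝ᵥ
         (CI t *ᵥ xN t + DIw t *ᵥ w t + DId t *ᵥ d t)))
      MeasureTheory.volume 0 T := by
    apply ContinuousOn.intervalIntegrable
    rwa [hIcc]
  have hGint : IntervalIntegrable (fun t =>
      (((Ww t)ᵀ)⁻¹ *ᵥ (((B2 t)ᵀ * Xw t + (D2 t)ᵀ * Mw t * C2 t) *ᵥ xw t) +
          Ww t *ᵥ w t) ⬝ᵥ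
        (((Ww t)ᵀ)⁻¹ *ᵥ (((B2 t)ᵀ * Xw t + (D2 t)ᵀ * Mw t * C2 t) *ᵥ xw t) +
          Ww t *ᵥ w t)) MeasureTheory.volume 0 T := by
    apply ContinuousOn.intervalIntegrable
    rwa [hIcc]
  have hdint : IntervalIntegrable (fun t => d t ⬝ᵥ d t) MeasureTheory.volume 0 T := by
    apply ContinuousOn.intervalIntegrable
    rwa [hIcc]
  have hV'int : IntervalIntegrable V' MeasureTheory.volume 0 T := by
    apply ContinuousOn.intervalIntegrable
    rwa [hIcc]
  -- fundamental theorem of calculus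
  have hFTC : (∫ t in (0:ℝ)..T, V' t) = V T - V 0 :=
    intervalIntegral.integral_eq_sub_of_hasDerivAt
      (fun t ht => hVderiv t (hIcc ▸ ht)) hV'int
  have hV0 : V 0 = 0 := by
    have hξ0 : ξ 0 = 0 := by
      funext i
      rcases i with i | i | i <;> simp [hξdef, hxN0, hxv0, hxw0]
    simp [hVdef, hξ0, hxv0, hxw0]
  -- integral comparison
  have hmono : (∫ t in (0:ℝ)..T,
      ((((Wv t)ᵀ)⁻¹ *ᵥ (((B1 t)ᵀ * Xv t + (D1 t)ᵀ * Mv t * C1 t) *ᵥ xv t) +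
          Wv t *ᵥ (Cv t *ᵥ xN t + Dvw t *ᵥ w t + Dvd t *ᵥ d t)) ⬝ᵥ
       (((Wv t)ᵀ)⁻¹ *ᵥ (((B1 t)ᵀ * Xv t + (D1 t)ᵀ * Mv t * C1 t) *ᵥ xv t) +
          Wv t *ᵥ (Cv t *ᵥ xN t + Dvw t *ᵥ w t + Dvd t *ᵥ d t)) +
       (CI t *ᵥ xN t + DIw t *ᵥ w t + DId t *ᵥ d t) ⬝ᵥ
         (CI t *ᵥ xN t + DIw t *ᵥ w t + DId t *ᵥ d t))) ≤
      ∫ t in (0:ℝ)..T,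
      ((((Ww t)ᵀ)⁻¹ *ᵥ (((B2 t)ᵀ * Xw t + (D2 t)ᵀ * Mw t * C2 t) *ᵥ xw t) +
          Ww t *ᵥ w t) ⬝ᵥ
        (((Ww t)ᵀ)⁻¹ *ᵥ (((B2 t)ᵀ * Xw t + (D2 t)ᵀ * Mw t * C2 t) *ᵥ xw t) +
          Ww t *ᵥ w t) + (γ ^ 2 - ε) * (d t ⬝ᵥ d t) - V' t) := by
    refine intervalIntegral.integral_mono_on hT.le hFint
      ((hGint.add (hdint.const_mul _)).sub hV'int) ?_
    intro t ht
    have := hkey t ht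
    linarith
  have hsplit : (∫ t in (0:ℝ)..T,
      ((((Ww t)ᵀ)⁻¹ *ᵥ (((B2 t)ᵀ * Xw t + (D2 t)ᵀ * Mw t * C2 t) *ᵥ xw t) +
          Ww t *ᵥ w t) ⬝ᵥ
        (((Ww t)ᵀ)⁻¹ *ᵥ (((B2 t)ᵀ * Xw t + (D2 t)ᵀ * Mw t * C2 t) *ᵥ xw t) +
          Ww t *ᵥ w t) + (γ ^ 2 - ε) * (d t ⬝ᵥ d t) - V' t)) =
      (∫ t in (0:ℝ)..T,
      (((Ww t)ᵀ)⁻¹ *ᵥ (((B2 t)ᵀ * Xw t + (D2 t)ᵀ * Mw t * C2 t) *ᵥ xw t) +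
          Ww t *ᵥ w t) ⬝ᵥ
        (((Ww t)ᵀ)⁻¹ *ᵥ (((B2 t)ᵀ * Xw t + (D2 t)ᵀ * Mw t * C2 t) *ᵥ xw t) +
          Ww t *ᵥ w t))
      + (γ ^ 2 - ε) * (∫ t in (0:ℝ)..T, d t ⬝ᵥ d t) - (V T - V 0) := by
    rw [intervalIntegral.integral_sub (hGint.add (hdint.const_mul _)) hV'int,
      intervalIntegral.integral_add hGint (hdint.const_mul _),
      intervalIntegral.integral_const_mul, hFTC]
  -- terminal bound
  have heE : (CE T *ᵥ xN T) ⬝ᵥ (CE T *ᵥ xN T) ≤ V T := by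
    have h9 := hPT (ξ T)
    have hCEξ : fromCols (CE T) (0 : Matrix (Fin nE) (Fin n1 ⊕ Fin n2) ℝ) *ᵥ ξ T
        = CE T *ᵥ xN T := by
      simp only [hξdef]
      rw [fromCols_mulVec_sumElim, Matrix.zero_mulVec, add_zero]
    have hexp : ξ T ⬝ᵥ
        (((fromCols (CE T) (0 : Matrix (Fin nE) (Fin n1 ⊕ Fin n2) ℝ))ᵀ *
          fromCols (CE T) (0 : Matrix (Fin nE) (Fin n1 ⊕ Fin n2) ℝ)) *ᵥ ξ T)
        = (CE T *ᵥ xN T) ⬝ᵥ (CE T *ᵥ xN T) := by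
      rw [← Matrix.mulVec_mulVec, ← dpml, hCEξ]
    rw [Matrix.sub_mulVec, dotProduct_sub, hexp] at h9
    have hVT : V T = ξ T ⬝ᵥ (P T *ᵥ ξ T) := by
      simp [hVdef, hXvT, hXwT]
    linarith
  -- scaling of the disturbance
  have hH : (∫ t in (0:ℝ)..T, (γ • d t) ⬝ᵥ (γ • d t))
      = γ ^ 2 * ∫ t in (0:ℝ)..T, d t ⬝ᵥ d t := by
    rw [← intervalIntegral.integral_const_mul]
    congr 1
    funext t
    rw [smul_dotProduct, dotProduct_smul, smul_eq_mul, smul_eq_mul]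
    ring
  have harith : (1 - ε / γ ^ 2) * (γ ^ 2 * (∫ t in (0:ℝ)..T, d t ⬝ᵥ d t))
      = (γ ^ 2 - ε) * (∫ t in (0:ℝ)..T, d t ⬝ᵥ d t) := by
    have hγ2 : γ ^ 2 ≠ 0 := by positivity
    field_simp
  rw [hH, harith]
  rw [hsplit, hV0] at hmono
  refine le_trans (add_le_add heE hmono) ?_
  linarith
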